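/- arXiv:2310.04303 — 5 statements merged into one kernel-verified Lean document; each statement's English description precedes it below -/
import Mathlib

section
/- Let G be a finite simple graph and X a feedback vertex set of G (i.e., G - X is acyclic). If every vertex of G has degree at least two, then the number of vertices of G that do not have degree exactly two is at most |X| + sum over v in X of deg_G(v). -/
open SimpleGraph Finset

section Aux
variable {W : Type*}

/-- In a path from `u`, at most one edge contains `u`. -/
lemma head_edge_unique {G : SimpleGraph W} {u v a b : W} {p : G.Walk u v}
    (hp : p.IsPath) (ha : s(u, a) ∈ p.edges) (hb : s(u, b) ∈ p.edges) : a = b := by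
  cases p with
  | nil => simp at ha
  | cons h q =>
    rename_i y
    rw [SimpleGraph.Walk.cons_isPath_iff] at hp
    rw [SimpleGraph.Walk.edges_cons, List.mem_cons] at ha hb
    have key : ∀ c : W, s(u, c) = s(u, y) ∨ s(u, c) ∈ q.edges → c = y := by
      intro c hc
      rcases hc with hc | hc
      · rw [Sym2.eq_iff] at hc
        rcases hc with ⟨-, rfl⟩ | ⟨rfl, rfl⟩
        · rfl
        · exact absurd rfl h.ne
      · exact absurd (q.fst_mem_support_of_mem_edges hc) hp.2
    rw [key a ha, key b hb]

lemma exists_degree_le_one [Fintype W] [DecidableEq W] (H : SimpleGraph W)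
    [DecidableRel H.Adj] (hac : H.IsAcyclic) [Nonempty W] : ∃ v, H.degree v ≤ 1 := by
  by_contra hcon
  push_neg at hcon
  have key : ∀ n : ℕ, ∃ (u v : W) (p : H.Walk u v), p.IsPath ∧ p.length = n := by
    intro n
    induction n with
    | zero =>
      obtain ⟨u⟩ := ‹Nonempty W›
      exact ⟨u, u, SimpleGraph.Walk.nil, SimpleGraph.Walk.IsPath.nil, rfl⟩
    | succ m ih =>
      obtain ⟨u, v, p, hp, hlen⟩ := ih
      have hdeg : 1 < (H.neighborFinset u).card := by
        rw [SimpleGraph.card_neighborFinset_eq_degree]; exact hcon u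
      obtain ⟨a, haN, b, hbN, hab⟩ := Finset.one_lt_card.mp hdeg
      rw [SimpleGraph.mem_neighborFinset] at haN hbN
      -- if some neighbor is not on p, extend; else build a cycle
      by_cases haS : a ∈ p.support
      · by_cases hbS : b ∈ p.support
        · -- both on the path; one of the edges s(u,a), s(u,b) is not on p
          have hne : s(u, a) ∉ p.edges ∨ s(u, b) ∉ p.edges := by
            by_contra hcc
            push_neg at hcc
            exact hab (head_edge_unique hp hcc.1 hcc.2)
          -- wlog: get a neighbor w on the path with s(u,w) ∉ p.edges
          obtain ⟨w, hwN, hwS, hwE⟩ : ∃ w, H.Adj u w ∧ w ∈ p.support ∧ s(u, w) ∉ p.edges := by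
            rcases hne with h1 | h1
            · exact ⟨a, haN, haS, h1⟩
            · exact ⟨b, hbN, hbS, h1⟩
          exfalso
          have hq : (p.takeUntil w hwS).IsPath := hp.takeUntil hwS
          have hcyc : (SimpleGraph.Walk.cons hwN (p.takeUntil w hwS).reverse).IsCycle := by
            rw [SimpleGraph.Walk.cons_isCycle_iff]
            refine ⟨hq.reverse, ?_⟩
            rw [SimpleGraph.Walk.edges_reverse, List.mem_reverse]
            exact fun hmem => hwE (p.edges_takeUntil_subset hwS hmem)
          exact hac _ hcyc
        · exact ⟨b, v, SimpleGraph.Walk.cons hbN.symm p,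
            (SimpleGraph.Walk.cons_isPath_iff _ _).mpr ⟨hp, hbS⟩, by simp [hlen]⟩
      · exact ⟨a, v, SimpleGraph.Walk.cons haN.symm p,
          (SimpleGraph.Walk.cons_isPath_iff _ _).mpr ⟨hp, haS⟩, by simp [hlen]⟩
  obtain ⟨u, v, p, hp, hlen⟩ := key (Fintype.card W)
  have := hp.length_lt
  omega

lemma isAcyclic_induce {G : SimpleGraph W} (h : G.IsAcyclic) (s : Set W) :
    (G.induce s).IsAcyclic := by
  intro v c hc
  exact h _ ((SimpleGraph.Walk.map_isCycle_iff_of_injective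
    (f := (SimpleGraph.Embedding.induce (G := G) s).toHom)
    (SimpleGraph.Embedding.induce (G := G) s).injective).mpr hc)

universe u

lemma acyclic_card_edge_le :
    ∀ (n : ℕ) {W : Type u} [Fintype W] [DecidableEq W] (H : SimpleGraph W)
      [DecidableRel H.Adj], Fintype.card W = n → H.IsAcyclic →
      H.edgeFinset.card ≤ n := by
  intro n
  induction n using Nat.strong_induction_on with
  | _ n ih =>
    intro W _ _ H _ hcard hac
    rcases isEmpty_or_nonempty W with hW | hW
    · have : H.edgeFinset = ∅ := Finset.eq_empty_of_isEmpty _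
      simp [this]
    · obtain ⟨m, hm⟩ : ∃ m, n = m + 1 := by
        have : 0 < n := hcard ▸ Fintype.card_pos
        exact ⟨n - 1, by omega⟩
      obtain ⟨v, hv⟩ := exists_degree_le_one H hac
      set s : Set W := {v}ᶜ with hs
      haveI : DecidablePred (· ∈ s) := fun w => decidable_of_iff (w ≠ v) (by simp [hs])
      haveI : DecidableRel (H.induce s).Adj := fun a b =>
        inferInstanceAs (Decidable (H.Adj a b))
      have hcard' : Fintype.card s = m := by
        have h1 : Fintype.card s = ({v}ᶜ : Finset W).card :=
          Fintype.card_of_subtype _ (by simp [hs])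
        rw [Finset.card_compl, Finset.card_singleton] at h1
        omega
      have hac' := isAcyclic_induce hac s
      have hrec : (H.induce s).edgeFinset.card ≤ m :=
        ih m (by omega) (H.induce s) hcard' hac'
      -- split edges of H
      have hsplit := Finset.card_filter_add_card_filter_not
        (s := H.edgeFinset) (p := fun e => v ∈ e)
      have h1 : (H.edgeFinset.filter (fun e => v ∈ e)).card ≤ 1 := by
        have : H.edgeFinset.filter (fun e => v ∈ e) = H.incidenceFinset v := by
          rw [SimpleGraph.incidenceFinset_eq_filter]
        rw [this, SimpleGraph.card_incidenceFinset_eq_degree]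
        exact hv
      have h2 : (H.edgeFinset.filter (fun e => ¬ v ∈ e)).card
          ≤ (H.induce s).edgeFinset.card := by
        apply Finset.card_le_card_of_surjOn (Sym2.map (Subtype.val : s → W))
        intro e he
        simp only [Finset.coe_filter, Set.mem_setOf_eq, SimpleGraph.mem_edgeFinset] at he
        obtain ⟨he1, he2⟩ := he
        induction e with
        | _ a b =>
          have hadj : H.Adj a b := he1
          have haa : a ∈ s := by simp [hs]; rintro rfl; exact he2 (Sym2.mem_mk_left _ _)
          have hbb : b ∈ s := by simp [hs]; rintro rfl; exact he2 (Sym2.mem_mk_right _ _)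
          refine ⟨s(⟨a, haa⟩, ⟨b, hbb⟩), ?_, rfl⟩
          simp only [Finset.mem_coe, SimpleGraph.mem_edgeFinset]
          exact hadj
      omega

end Aux

/-- If `X` is a feedback vertex set of a graph `G` (removing `X` leaves an acyclic graph)
and every vertex of `G` has degree at least two, then the number of vertices whose degree
is not exactly two is at most `|X| + ∑_{v ∈ X} deg v`. -/
theorem stmt1 {V : Type*} [Fintype V] [DecidableEq V] (G : SimpleGraph V)
    [DecidableRel G.Adj] (X : Finset V)
    (hX : (G.induce ((↑X : Set V)ᶜ)).IsAcyclic)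
    (hdeg : ∀ v : V, 2 ≤ G.degree v) :
    (Finset.univ.filter fun v => G.degree v ≠ 2).card ≤ X.card + ∑ v ∈ X, G.degree v := by
  set s : Set V := (↑X : Set V)ᶜ with hsdef
  haveI : DecidablePred (· ∈ s) := fun v => decidable_of_iff (v ∉ X) (by simp [hsdef])
  haveI : DecidableRel (G.induce s).Adj := fun a b =>
    inferInstanceAs (Decidable (G.Adj a b))
  have hdeg_split : ∀ v : V, G.degree v = ∑ w, if G.Adj v w then 1 else 0 := fun v => by
    rw [← SimpleGraph.card_neighborFinset_eq_degree, SimpleGraph.neighborFinset_eq_filter,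
      Finset.card_filter]
  -- Step 1: split the bad vertices into those in X and those outside
  have step1 : (Finset.univ.filter fun v => G.degree v ≠ 2).card
      ≤ X.card + ((Xᶜ : Finset V).filter fun v => G.degree v ≠ 2).card := by
    calc (Finset.univ.filter fun v => G.degree v ≠ 2).card
        = ((X ∪ Xᶜ).filter fun v => G.degree v ≠ 2).card := by rw [Finset.union_compl]
      _ = ((X.filter fun v => G.degree v ≠ 2) ∪
            ((Xᶜ : Finset V).filter fun v => G.degree v ≠ 2)).card := by
          rw [Finset.filter_union]
      _ ≤ (X.filter fun v => G.degree v ≠ 2).card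
            + ((Xᶜ : Finset V).filter fun v => G.degree v ≠ 2).card :=
          Finset.card_union_le _ _
      _ ≤ X.card + ((Xᶜ : Finset V).filter fun v => G.degree v ≠ 2).card :=
          Nat.add_le_add_right (Finset.card_filter_le _ _) _
  -- Step 2: bad vertices outside X are controlled by degree sum over Xᶜ
  have step2 : 2 * (Xᶜ : Finset V).card
      + ((Xᶜ : Finset V).filter fun v => G.degree v ≠ 2).card
      ≤ ∑ v ∈ Xᶜ, G.degree v := by
    have hpt := Finset.sum_le_sum (s := (Xᶜ : Finset V))
      (f := fun v => 2 + if G.degree v ≠ 2 then 1 else 0) (g := fun v => G.degree v)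
      (fun v _ => by have := hdeg v; split_ifs with h <;> omega)
    rw [Finset.sum_add_distrib, Finset.sum_const, smul_eq_mul, mul_comm] at hpt
    rwa [← Finset.card_filter] at hpt
  -- Step 3: degree sum over Xᶜ is controlled by the forest bound and edges to X
  have hcardS : Fintype.card s = (Xᶜ : Finset V).card :=
    Fintype.card_of_subtype _ (by simp [hsdef])
  have hforest : ∑ a : s, (G.induce s).degree a ≤ 2 * (Xᶜ : Finset V).card := by
    rw [SimpleGraph.sum_degrees_eq_twice_card_edges]
    have := acyclic_card_edge_le (Fintype.card s) (G.induce s) rfl hX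
    omega
  have hin_eq : (∑ v ∈ Xᶜ, ∑ w ∈ Xᶜ, if G.Adj v w then 1 else 0)
      = ∑ a : s, (G.induce s).degree a := by
    calc (∑ v ∈ Xᶜ, ∑ w ∈ Xᶜ, if G.Adj v w then 1 else 0)
        = ∑ a : s, ∑ w ∈ Xᶜ, (if G.Adj ↑a w then 1 else 0) :=
          Finset.sum_subtype _ (by simp [hsdef]) _
      _ = ∑ a : s, ∑ b : s, (if G.Adj ↑a ↑b then 1 else 0) :=
          Finset.sum_congr rfl fun a _ => Finset.sum_subtype _ (by simp [hsdef]) _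
      _ = ∑ a : s, (G.induce s).degree a := by
          refine Finset.sum_congr rfl fun a _ => ?_
          rw [← SimpleGraph.card_neighborFinset_eq_degree,
            SimpleGraph.neighborFinset_eq_filter, Finset.card_filter]
          exact Finset.sum_congr rfl fun b _ => if_congr Iff.rfl rfl rfl
  have hcross : (∑ v ∈ Xᶜ, ∑ w ∈ X, if G.Adj v w then 1 else 0)
      ≤ ∑ x ∈ X, G.degree x := by
    rw [Finset.sum_comm]
    refine Finset.sum_le_sum fun x _ => ?_
    calc (∑ v ∈ Xᶜ, if G.Adj v x then 1 else 0)
        = ∑ v ∈ Xᶜ, (if G.Adj x v then 1 else 0) :=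
          Finset.sum_congr rfl fun v _ => if_congr (SimpleGraph.adj_comm G v x) rfl rfl
      _ ≤ ∑ v, (if G.Adj x v then 1 else 0) :=
          Finset.sum_le_sum_of_subset (Finset.subset_univ _)
      _ = G.degree x := (hdeg_split x).symm
  have step3 : ∑ v ∈ Xᶜ, G.degree v
      ≤ 2 * (Xᶜ : Finset V).card + ∑ x ∈ X, G.degree x := by
    have hsum : ∑ v ∈ Xᶜ, G.degree v
        = (∑ v ∈ Xᶜ, ∑ w ∈ Xᶜ, if G.Adj v w then 1 else 0)
          + ∑ v ∈ Xᶜ, ∑ w ∈ X, if G.Adj v w then 1 else 0 := by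
      rw [← Finset.sum_add_distrib]
      refine Finset.sum_congr rfl fun v _ => ?_
      rw [hdeg_split v, ← Finset.sum_add_sum_compl X (fun w => if G.Adj v w then 1 else 0)]
      omega
    omega
  omega
end

section
/- Let G be a graph, C a wide diamond with distinct endpoints v, u, and |C| ≥ 3. Then every minimum dominating set X of G satisfies X ∩ {v,u} ≠ ∅. -/
/-- `D` is a dominating set of `G`: every vertex is in `D` or adjacent to a vertex of `D`. -/
def IsDomSet {V : Type*} (G : SimpleGraph V) (D : Finset V) : Prop :=
  ∀ w : V, w ∈ D ∨ ∃ d ∈ D, G.Adj d w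

/-- `D` is a minimum dominating set of `G`. -/
def IsMinDomSet {V : Type*} (G : SimpleGraph V) (D : Finset V) : Prop :=
  IsDomSet G D ∧ ∀ D' : Finset V, IsDomSet G D' → D.card ≤ D'.card

/-- If `C` is a wide diamond with distinct endpoints `v, u` and `|C| ≥ 3`, then every
minimum dominating set contains `v` or `u`. -/
theorem stmt5 {V : Type*} [Fintype V] [DecidableEq V] (G : SimpleGraph V)
    (C : Finset V) (v u : V) (hvu : v ≠ u) (hv : v ∉ C) (hu : u ∉ C)
    (hC : ∀ c ∈ C, G.neighborSet c = {v, u}) (hcard : 3 ≤ C.card)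
    (X : Finset V) (hX : IsMinDomSet G X) :
    v ∈ X ∨ u ∈ X := by
  by_contra h
  push_neg at h
  obtain ⟨hvX, huX⟩ := h
  -- neighbors of any c ∈ C are exactly v and u
  have hnbr : ∀ c ∈ C, ∀ w, G.Adj c w ↔ (w = v ∨ w = u) := by
    intro c hc w
    have := hC c hc
    constructor
    · intro hadj
      have : w ∈ G.neighborSet c := hadj
      rw [hC c hc] at this
      simpa using this
    · intro hw
      have : w ∈ ({v, u} : Set V) := by simpa using hw
      rw [← hC c hc] at this
      exact this
  -- C ⊆ X
  have hCX : C ⊆ X := by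
    intro c hc
    rcases hX.1 c with h1 | ⟨d, hd, hadj⟩
    · exact h1
    · rcases (hnbr c hc d).1 hadj.symm with rfl | rfl
      · exact absurd hd hvX
      · exact absurd hd huX
  -- the smaller dominating set
  set X' : Finset V := (X \ C) ∪ {v, u} with hX'def
  have hdom : IsDomSet G X' := by
    intro w
    rcases hX.1 w with h1 | ⟨d, hd, hadj⟩
    · by_cases hwC : w ∈ C
      · right
        refine ⟨v, ?_, ?_⟩
        · simp [hX'def]
        · exact (G.adj_symm ((hnbr w hwC v).2 (Or.inl rfl)))
      · left; simp [hX'def, h1, hwC]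
    · by_cases hdC : d ∈ C
      · rcases (hnbr d hdC w).1 hadj with rfl | rfl
        · left; simp [hX'def]
        · left; simp [hX'def]
      · right; exact ⟨d, by simp [hX'def, hd, hdC], hadj⟩
  have hle := hX.2 X' hdom
  have hcard' : X'.card < X.card := by
    have h1 : X'.card ≤ (X \ C).card + 2 := by
      calc X'.card ≤ (X \ C).card + ({v, u} : Finset V).card :=
            Finset.card_union_le _ _
        _ ≤ (X \ C).card + 2 := by
            have : ({v, u} : Finset V).card ≤ 2 := Finset.card_insert_le _ _ |>.trans (by simp)
            omega
    have h2 : (X \ C).card = X.card - C.card := Finset.card_sdiff_of_subset hCX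
    have h3 : C.card ≤ X.card := Finset.card_le_card hCX
    omega
  omega
end

section
/- Let G be a graph, C a wide diamond with distinct endpoints v, u, and |C| ≥ 3. If X is a minimum dominating set of G containing both v and u, then X ∩ C = ∅. -/
/-- If `C` is a wide diamond with distinct endpoints `v, u` and `|C| ≥ 3`, then a minimum
dominating set containing both `v` and `u` contains no vertex of `C`. -/
theorem stmt6 {V : Type*} [Fintype V] [DecidableEq V] (G : SimpleGraph V)
    (C : Finset V) (v u : V) (hvu : v ≠ u) (hv : v ∉ C) (hu : u ∉ C)
    (hC : ∀ c ∈ C, G.neighborSet c = {v, u}) (hcard : 3 ≤ C.card)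
    (X : Finset V) (hX : IsMinDomSet G X) (hvX : v ∈ X) (huX : u ∈ X) :
    X ∩ C = ∅ := by
  by_contra h
  obtain ⟨c, hc⟩ := Finset.nonempty_iff_ne_empty.2 h
  rw [Finset.mem_inter] at hc
  obtain ⟨hcX, hcC⟩ := hc
  have hvc : v ≠ c := fun e => hv (e ▸ hcC)
  have huc : u ≠ c := fun e => hu (e ▸ hcC)
  have hAdjvc : G.Adj v c := by
    have : v ∈ G.neighborSet c := by rw [hC c hcC]; left; rfl
    exact (SimpleGraph.mem_neighborSet _ _ _).1 this |>.symm
  have hdom : IsDomSet G (X.erase c) := by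
    intro w
    rcases hX.1 w with hw | ⟨d, hdX, hdw⟩
    · by_cases hwc : w = c
      · exact Or.inr ⟨v, Finset.mem_erase.2 ⟨hvc, hvX⟩, hwc ▸ hAdjvc⟩
      · exact Or.inl (Finset.mem_erase.2 ⟨hwc, hw⟩)
    · by_cases hdc : d = c
      · have : w ∈ G.neighborSet c := by
          rw [SimpleGraph.mem_neighborSet]; exact hdc ▸ hdw
        rw [hC c hcC] at this
        rcases this with rfl | rfl
        · exact Or.inl (Finset.mem_erase.2 ⟨hvc, hvX⟩)
        · exact Or.inl (Finset.mem_erase.2 ⟨huc, huX⟩)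
      · exact Or.inr ⟨d, Finset.mem_erase.2 ⟨hdc, hdX⟩, hdw⟩
  have := hX.2 _ hdom
  have hlt := Finset.card_erase_lt_of_mem hcX
  omega
end

section
/- Let G be a graph, C a wide diamond with distinct endpoints v, u, and |C| ≥ 3. Then every minimum dominating set X of G satisfies |X ∩ C| ≤ 1. -/
/-- If `C` is a wide diamond with distinct endpoints `v, u` and `|C| ≥ 3`, then every
minimum dominating set contains at most one vertex of `C`. -/
theorem stmt7 {V : Type*} [Fintype V] [DecidableEq V] (G : SimpleGraph V)
    (C : Finset V) (v u : V) (hvu : v ≠ u) (hv : v ∉ C) (hu : u ∉ C)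
    (hC : ∀ c ∈ C, G.neighborSet c = {v, u}) (hcard : 3 ≤ C.card)
    (X : Finset V) (hX : IsMinDomSet G X) :
    (X ∩ C).card ≤ 1 := by
  -- basic adjacency facts
  have hadj_cv : ∀ c ∈ C, G.Adj c v := by
    intro c hc
    have : v ∈ G.neighborSet c := by rw [hC c hc]; left; rfl
    exact this
  have hadj_cu : ∀ c ∈ C, G.Adj c u := by
    intro c hc
    have : u ∈ G.neighborSet c := by rw [hC c hc]; right; rfl
    exact this
  have hnbr : ∀ c ∈ C, ∀ w, G.Adj c w → w = v ∨ w = u := by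
    intro c hc w hw
    have : w ∈ G.neighborSet c := hw
    rw [hC c hc] at this
    exact this
  by_contra h
  push_neg at h
  obtain ⟨c₁, hc₁, c₂, hc₂, hne⟩ := Finset.one_lt_card.mp h
  have hc₁X : c₁ ∈ X := (Finset.mem_inter.mp hc₁).1
  have hc₁C : c₁ ∈ C := (Finset.mem_inter.mp hc₁).2
  have hc₂X : c₂ ∈ X := (Finset.mem_inter.mp hc₂).1
  have hc₂C : c₂ ∈ C := (Finset.mem_inter.mp hc₂).2
  by_cases hvuX : v ∈ X ∨ u ∈ X
  · -- remove c₁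
    have hdom : IsDomSet G (X.erase c₁) := by
      intro w
      rcases hX.1 w with hw | ⟨d, hd, hdw⟩
      · by_cases hwc : w = c₁
        · rcases hvuX with hv' | hu'
          · exact Or.inr ⟨v, Finset.mem_erase.mpr ⟨fun hvc => hv (hvc ▸ hc₁C), hv'⟩,
              hwc ▸ (hadj_cv c₁ hc₁C).symm⟩
          · exact Or.inr ⟨u, Finset.mem_erase.mpr ⟨fun hvc => hu (hvc ▸ hc₁C), hu'⟩,
              hwc ▸ (hadj_cu c₁ hc₁C).symm⟩
        · exact Or.inl (Finset.mem_erase.mpr ⟨hwc, hw⟩)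
      · by_cases hdc : d = c₁
        · rcases hnbr c₁ hc₁C w (hdc ▸ hdw) with rfl | rfl
          · exact Or.inr ⟨c₂, Finset.mem_erase.mpr ⟨hne.symm, hc₂X⟩, hadj_cv c₂ hc₂C⟩
          · exact Or.inr ⟨c₂, Finset.mem_erase.mpr ⟨hne.symm, hc₂X⟩, hadj_cu c₂ hc₂C⟩
        · exact Or.inr ⟨d, Finset.mem_erase.mpr ⟨hdc, hd⟩, hdw⟩
    have := hX.2 _ hdom
    have hcard' : (X.erase c₁).card < X.card := Finset.card_erase_lt_of_mem hc₁X
    omega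
  · push_neg at hvuX
    obtain ⟨hvX, huX⟩ := hvuX
    -- every c ∈ C must be in X
    have hCX : C ⊆ X := by
      intro c hc
      rcases hX.1 c with hcX | ⟨d, hd, hdc⟩
      · exact hcX
      · rcases hnbr c hc d hdc.symm with rfl | rfl
        · exact absurd hd hvX
        · exact absurd hd huX
    set X' := (X \ C) ∪ {v, u} with hX'
    have hdom : IsDomSet G X' := by
      intro w
      rcases hX.1 w with hw | ⟨d, hd, hdw⟩
      · by_cases hwC : w ∈ C
        · exact Or.inr ⟨v, by simp [hX'], hadj_cv w hwC |>.symm⟩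
        · exact Or.inl (by simp [hX', hw, hwC])
      · by_cases hdC : d ∈ C
        · rcases hnbr d hdC w hdw with rfl | rfl
          · exact Or.inl (by simp [hX'])
          · exact Or.inl (by simp [hX'])
        · exact Or.inr ⟨d, by simp [hX', hd, hdC], hdw⟩
    have hle := hX.2 _ hdom
    have h1 : X'.card ≤ (X \ C).card + 2 := by
      calc X'.card ≤ (X \ C).card + ({v, u} : Finset V).card := Finset.card_union_le _ _
      _ ≤ (X \ C).card + 2 := by
          have : ({v, u} : Finset V).card ≤ 2 := Finset.card_le_two
          omega
    have h2 : (X \ C).card = X.card - C.card := by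
      rw [Finset.card_sdiff_of_subset hCX]
    have h3 : C.card ≤ X.card := Finset.card_le_card hCX
    omega
end

section
/- Let G be a graph and C a chain (a connected component of G minus its vertices of degree ≠ 2) that is an induced path whose internal structure connects two endpoints in the rest of G. Then every minimum feedback vertex set of G contains at most one vertex of C. -/
open SimpleGraph

section Aux

variable {V : Type*}

/-- Lift a walk whose support lies in `s` to the induced graph on `s`. -/
def liftW {G : SimpleGraph V} {s : Set V} :
    ∀ {u v : V} (p : G.Walk u v), (∀ x ∈ p.support, x ∈ s) →
      ∀ (hu : u ∈ s) (hv : v ∈ s), (G.induce s).Walk ⟨u, hu⟩ ⟨v, hv⟩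
  | _, _, Walk.nil, _, _, _ => Walk.nil
  | _, _, Walk.cons h p, hp, hu, hv =>
      Walk.cons (by exact h)
        (liftW p (fun x hx => hp x (by simp [hx]))
          (hp _ (by simp)) hv)

lemma liftW_map {G : SimpleGraph V} {s : Set V} :
    ∀ {u v : V} (p : G.Walk u v) (hp : ∀ x ∈ p.support, x ∈ s) (hu : u ∈ s) (hv : v ∈ s),
      (liftW p hp hu hv).map (SimpleGraph.Embedding.induce s).toHom = p
  | _, _, Walk.nil, _, _, _ => rfl
  | _, _, Walk.cons h p, hp, hu, hv => by
      exact congrArg (Walk.cons h) (liftW_map p _ _ hv)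

/-- A cycle based at a degree-two vertex `c` contains every neighbor of `c`. -/
lemma mem_support_of_adj_base [Fintype V] [DecidableEq V] {G : SimpleGraph V}
    [DecidableRel G.Adj] {c d : V} {q : G.Walk c c} (hq : q.IsCycle)
    (h2 : G.degree c = 2) (hd : G.Adj c d) : d ∈ q.support := by
  cases q with
  | nil => exact absurd hq (Walk.IsCycle.not_of_nil)
  | @cons _ b _ h p =>
    obtain ⟨hp, he⟩ := (Walk.cons_isCycle_iff p h).mp hq
    have hlen : 2 ≤ p.length := by
      have := hq.three_le_length
      simp only [Walk.length_cons] at this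
      omega
    have hpn : ¬ p.reverse.Nil := by
      rw [Walk.not_nil_iff_lt_length, Walk.length_reverse]; omega
    have hadj : G.Adj c (p.reverse.getVert 1) := p.reverse.adj_snd hpn
    set u := p.reverse.getVert 1 with hu
    have hmemrev : u ∈ p.reverse.support := by
      rw [← Walk.cons_tail_eq p.reverse hpn]
      exact List.mem_cons_of_mem _ (Walk.start_mem_support _)
    have hmem : u ∈ p.support := by
      rw [Walk.support_reverse] at hmemrev
      exact List.mem_reverse.mp hmemrev
    have hub : u ≠ b := by
      intro h'
      apply he
      have hedge : s(c, u) ∈ p.reverse.edges := by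
        rw [← Walk.cons_tail_eq p.reverse hpn]
        exact List.Mem.head _
      rw [Walk.edges_reverse, List.mem_reverse] at hedge
      rw [h'] at hedge
      simpa [Sym2.eq_swap] using hedge
    have hcard : ({u, b} : Finset V).card = 2 := Finset.card_pair hub
    have hsub : ({u, b} : Finset V) ⊆ G.neighborFinset c := by
      intro z hz
      rcases Finset.mem_insert.mp hz with rfl | hz
      · exact (G.mem_neighborFinset _ _).mpr hadj
      · rw [Finset.mem_singleton] at hz
        subst hz
        exact (G.mem_neighborFinset _ _).mpr h
    have hset : ({u, b} : Finset V) = G.neighborFinset c := by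
      apply Finset.eq_of_subset_of_card_le hsub
      rw [G.card_neighborFinset_eq_degree, h2, hcard]
    have hdm : d ∈ ({u, b} : Finset V) := by
      rw [hset]
      exact (G.mem_neighborFinset c d).mpr hd
    rcases Finset.mem_insert.mp hdm with rfl | hdm
    · simp only [Walk.support_cons]
      exact List.mem_cons_of_mem _ hmem
    · rw [Finset.mem_singleton] at hdm
      subst hdm
      simp only [Walk.support_cons]
      exact List.mem_cons_of_mem _ p.start_mem_support

/-- A cycle containing a degree-two vertex `c` contains every neighbor of `c`. -/
lemma mem_support_of_adj [Fintype V] [DecidableEq V] {G : SimpleGraph V}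
    [DecidableRel G.Adj] {v₀ c d : V} {q : G.Walk v₀ v₀} (hq : q.IsCycle)
    (hc : c ∈ q.support) (h2 : G.degree c = 2) (hd : G.Adj c d) : d ∈ q.support := by
  have h' : d ∈ (q.rotate c hc).support :=
    mem_support_of_adj_base (hq.rotate hc) h2 hd
  rw [← Walk.mem_verts_toSubgraph, Walk.toSubgraph_rotate] at h'
  rwa [Walk.mem_verts_toSubgraph] at h'

end Aux

/-- `X` is a feedback vertex set of `G`: deleting `X` leaves an acyclic graph. -/
def IsFVS {V : Type*} [DecidableEq V] (G : SimpleGraph V) (X : Finset V) : Prop :=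
  (G.induce ((↑X : Set V)ᶜ)).IsAcyclic

/-- `X` is a minimum feedback vertex set of `G`. -/
def IsMinFVS {V : Type*} [DecidableEq V] (G : SimpleGraph V) (X : Finset V) : Prop :=
  IsFVS G X ∧ ∀ Y : Finset V, IsFVS G Y → X.card ≤ Y.card

/-- If `C` is a chain of `G` (a nonempty connected set of degree-two vertices of `G`
that is closed under adjacency to degree-two vertices, i.e. a connected component of
`G - V_{≠2}(G)`), then every minimum feedback vertex set of `G` contains at most one
vertex of `C`. -/
theorem stmt8 {V : Type*} [Fintype V] [DecidableEq V] (G : SimpleGraph V)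
    [DecidableRel G.Adj] (C : Finset V) (hne : C.Nonempty)
    (hdeg : ∀ c ∈ C, G.degree c = 2)
    (hconn : (G.induce (↑C : Set V)).Connected)
    (hclosed : ∀ c ∈ C, ∀ w : V, G.Adj c w → G.degree w = 2 → w ∈ C)
    (X : Finset V) (hX : IsMinFVS G X) :
    (X ∩ C).card ≤ 1 := by
  by_contra hgt
  push_neg at hgt
  obtain ⟨x, hx, y, hy, hxy⟩ := Finset.one_lt_card.mp hgt
  obtain ⟨hxX, hxC⟩ := Finset.mem_inter.mp hx
  obtain ⟨hyX, hyC⟩ := Finset.mem_inter.mp hy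
  set Y := X.erase y with hYdef
  have hYfvs : IsFVS G Y := by
    intro v p hp
    set q := p.map (SimpleGraph.Embedding.induce ((↑Y : Set V)ᶜ)).toHom with hqdef
    have hq : q.IsCycle := hp.map Subtype.val_injective
    have hqsupp : ∀ z ∈ q.support, z ∉ Y := by
      intro z hz
      rw [hqdef, Walk.support_map] at hz
      obtain ⟨⟨z', hz'⟩, _, rfl⟩ := List.mem_map.mp hz
      exact hz'
    by_cases hymem : (y : V) ∈ q.support
    · -- the cycle passes through y ∈ C, hence through all of C, hence through x ∈ Y
      have hall : ∀ z ∈ C, (z : V) ∈ q.support := by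
        intro z hzC
        obtain ⟨w⟩ := hconn.preconnected ⟨y, hyC⟩ ⟨z, hzC⟩
        have key : ∀ (a b : ↥(↑C : Set V)) (w : (G.induce (↑C : Set V)).Walk a b),
            (a : V) ∈ q.support → (b : V) ∈ q.support := by
          intro a b w
          induction w with
          | nil => exact id
          | @cons a' b' c' hadj w' ih =>
            intro ha
            exact ih (mem_support_of_adj hq ha (hdeg _ a'.2) hadj)
        exact key _ _ w hymem
      exact hqsupp x (hall x hxC) (Finset.mem_erase.mpr ⟨hxy, hxX⟩)
    · -- the cycle avoids y, hence avoids all of X: contradiction with acyclicity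
      have hsupp : ∀ z ∈ q.support, z ∈ ((↑X : Set V)ᶜ) := by
        intro z hz hzX
        by_cases hzy : z = y
        · exact hymem (hzy ▸ hz)
        · exact hqsupp z hz (Finset.mem_erase.mpr ⟨hzy, hzX⟩)
      have hv : (v : V) ∈ ((↑X : Set V)ᶜ) := hsupp _ q.start_mem_support
      have hq' : ((liftW q hsupp hv hv).map
          (SimpleGraph.Embedding.induce ((↑X : Set V)ᶜ)).toHom).IsCycle := by
        exact (congrArg (fun w => Walk.IsCycle w) (liftW_map q hsupp hv hv)).mpr hq
      have := (Walk.map_isCycle_iff_of_injective Subtype.val_injective).mp hq'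
      exact hX.1 _ this
  have hle := hX.2 Y hYfvs
  have : Y.card < X.card := Finset.card_erase_lt_of_mem hyX
  omega
end
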